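/- Fix an integer k ≥ 1. For every λ with sin²(π/(4k+2)) ≤ λ < 1, there exists a phase φ ∈ (0,π] such that P_k^φ(λ) = 1. -/

import Mathlib

/-- The success probability `P_k^φ(λ)` of the matched-phase Grover algorithm after
`k` iterations: `P_k^φ(λ) = A·cos((2k+1)δ) + B` where `θ = arcsin √λ`,
`δ = arccos (1 − λ(1 − cos φ))`, `A = (sin²θ/sin²δ)(cos φ − cos δ)` and
`B = (sin²θ/sin²δ)(1 − cos φ·cos δ)`. -/
noncomputable def grovP (k : ℕ) (φ lam : ℝ) : ℝ :=
  let θ : ℝ := Real.arcsin (Real.sqrt lam)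
  let δ : ℝ := Real.arccos (1 - lam * (1 - Real.cos φ))
  let A : ℝ := Real.sin θ ^ 2 / Real.sin δ ^ 2 * (Real.cos φ - Real.cos δ)
  let B : ℝ := Real.sin θ ^ 2 / Real.sin δ ^ 2 * (1 - Real.cos φ * Real.cos δ)
  A * Real.cos ((2 * (k : ℝ) + 1) * δ) + B

/-- `φ_k^min = arccos(1 − (2 − 2cos(π/(2k+1)))/(1 − cos(π/(2k−1))))`. -/
noncomputable def phiMin (k : ℕ) : ℝ :=
  Real.arccos (1 - (2 - 2 * Real.cos (Real.pi / (2 * (k : ℝ) + 1))) /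
    (1 - Real.cos (Real.pi / (2 * (k : ℝ) - 1))))

/-- For k ≥ 1 and every λ with sin²(π/(4k+2)) ≤ λ < 1, there is a
phase φ ∈ (0,π] with P_k^φ(λ) = 1. -/
theorem exists_phase_reaching_certainty
    (k : ℕ) (hk : 1 ≤ k) (lam : ℝ)
    (hlam : Real.sin (Real.pi / (4 * (k : ℝ) + 2)) ^ 2 ≤ lam ∧ lam < 1) :
    ∃ φ ∈ Set.Ioc (0 : ℝ) Real.pi, grovP k φ lam = 1 := by
  obtain ⟨hlam1, hlam2⟩ := hlam
  set d : ℝ := Real.pi / (2 * (k : ℝ) + 1) with hd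
  have hk1 : (1 : ℝ) ≤ (k : ℝ) := by exact_mod_cast hk
  have hden : (1 : ℝ) < 2 * (k : ℝ) + 1 := by linarith
  have hd0 : 0 < d := div_pos Real.pi_pos (by linarith)
  have hdpi : d < Real.pi := by
    rw [hd, div_lt_iff₀ (by linarith)]
    nlinarith [Real.pi_pos]
  have hcosd : Real.cos d < 1 := by
    have := Real.cos_lt_cos_of_nonneg_of_le_pi (le_refl 0) hdpi.le hd0
    simpa using this
  have hsind : 0 < Real.sin d := Real.sin_pos_of_pos_of_lt_pi hd0 hdpi
  -- lam ≥ (1 - cos d)/2 from the half-angle identity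
  have hhalf : Real.sin (Real.pi / (4 * (k : ℝ) + 2)) ^ 2 = (1 - Real.cos d) / 2 := by
    have : Real.pi / (4 * (k : ℝ) + 2) = d / 2 := by
      rw [hd, div_div]; congr 1; ring
    rw [this, Real.sin_sq_eq_half_sub, show 2 * (d / 2) = d by ring]; ring
  have hlamge : (1 - Real.cos d) / 2 ≤ lam := by rw [← hhalf]; exact hlam1
  have hlam0 : 0 < lam := by
    have : 0 < (1 - Real.cos d) / 2 := by linarith
    linarith
  set c : ℝ := 1 - (1 - Real.cos d) / lam with hc
  have hc1 : c < 1 := by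
    have : 0 < (1 - Real.cos d) / lam := div_pos (by linarith) hlam0
    rw [hc]; linarith
  have hcm1 : -1 ≤ c := by
    rw [hc]
    have : (1 - Real.cos d) / lam ≤ 2 := by
      rw [div_le_iff₀ hlam0]; linarith
    linarith
  refine ⟨Real.arccos c, ⟨Real.arccos_pos.mpr hc1, Real.arccos_le_pi c⟩, ?_⟩
  have hcosφ : Real.cos (Real.arccos c) = c := Real.cos_arccos hcm1 hc1.le
  have hδarg : 1 - lam * (1 - Real.cos (Real.arccos c)) = Real.cos d := by
    rw [hcosφ, hc]; field_simp; ring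
  have hδ : Real.arccos (1 - lam * (1 - Real.cos (Real.arccos c))) = d := by
    rw [hδarg]; exact Real.arccos_cos hd0.le hdpi.le
  have hsinθ : Real.sin (Real.arcsin (Real.sqrt lam)) ^ 2 = lam := by
    rw [Real.sin_arcsin (by linarith [Real.sqrt_nonneg lam])
      (by rw [show (1:ℝ) = Real.sqrt 1 by simp]; exact Real.sqrt_le_sqrt hlam2.le)]
    exact Real.sq_sqrt hlam0.le
  have hcosk : Real.cos ((2 * (k : ℝ) + 1) * d) = -1 := by
    rw [hd, mul_div_cancel₀ _ (by linarith : (2 * (k : ℝ) + 1) ≠ 0), Real.cos_pi]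
  have hsind2 : Real.sin d ^ 2 = (1 - Real.cos d) * (1 + Real.cos d) := by
    have := Real.sin_sq_add_cos_sq d
    nlinarith
  have hlc : lam * (1 - c) = 1 - Real.cos d := by
    rw [hc]; field_simp; ring
  rw [hcosφ] at hδ
  simp only [grovP, hδ, hcosφ, hcosk, hsinθ, Real.cos_arccos hcm1 hc1.le]
  have hsne : Real.sin d ^ 2 ≠ 0 := by positivity
  have h2 : lam * (1 - c) * (1 + Real.cos d) = Real.sin d ^ 2 := by
    rw [hsind2, ← hlc]
  field_simp
  have hl : lam * lam⁻¹ = 1 := mul_inv_cancel₀ hlam0.ne'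
  linear_combination (-1 : ℝ) * Real.sin_sq_add_cos_sq d + (1 - Real.cos d ^ 2) * hl
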